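/- In the chord-space model with 0<q<1 and μ ∈ ℂ, let A₁, …, A_k be any finite sequence of operators with each A_t ∈ {a†_{R,0}, a†_{R,1}, a_{R,0}, a_{R,1}}, and let Ã_t = A_t + μW when A_t = a_{R,0} and Ã_t = A_t otherwise. Then ε((Ã₁ ∘ ⋯ ∘ Ã_k)(ω)) = Σ_{n=0}^{k} (μⁿ/[n]!_q)·ε((A₁ ∘ ⋯ ∘ A_k)(δ_{0ⁿ})), where 0ⁿ denotes the string of n zeros; moreover ε((A₁ ∘ ⋯ ∘ A_k)(δ_{0ⁿ})) = 0 for n > k, so the right-hand side equals the pairing ⟨ω|A₁⋯A_k|B_μ⟩ against the q-coherent state B_μ = Σ_n (μⁿ/[n]!_q)δ_{0ⁿ}. (In particular ⟨ω|H̃_{R,i₁}⋯H̃_{R,i_k}|ω⟩ = ⟨ω|H_{R,i₁}⋯H_{R,i_k}|B_μ⟩: the EoW-brane-deformed Hamiltonian moments equal undeformed moments against the q-coherent state.) -/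

import Mathlib

namespace DSSYK

/-- Binary strings (chord words); the letter `0` is `false`, the letter `1` is `true`. -/
abbrev Str : Type := List Bool

/-- The chord space: finitely supported complex functions on binary strings. -/
abbrev Sp : Type := Str →₀ ℂ

/-- Crossing weights: `Q 0 0 = q`, `Q 1 1 = q_m`, mixed crossings give `r`. -/
def Qmat (q qm r : ℝ) : Bool → Bool → ℂ
  | false, false => (q : ℂ)
  | true,  true  => (qm : ℂ)
  | _,     _     => (r : ℂ)

/-- Right creation `a†_{R,i}`: append the letter `i` on the right. -/
noncomputable def creR (i : Bool) : Sp →ₗ[ℂ] Sp :=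
  Finsupp.lift Sp ℂ Str fun w => Finsupp.single (w ++ [i]) 1

/-- Value of the right annihilation operator on a basis string: delete one letter
equal to `i`, weighted by the crossing factors with all letters to its right. -/
noncomputable def annVecR (Q : Bool → Bool → ℂ) (i : Bool) : Str → Sp
  | [] => 0
  | x :: t =>
      (if x = i then ((t.map (Q i)).prod) • Finsupp.single t (1 : ℂ) else 0)
        + Finsupp.mapDomain (List.cons x) (annVecR Q i t)

/-- Right annihilation `a_{R,i}`. -/
noncomputable def annR (Q : Bool → Bool → ℂ) (i : Bool) : Sp →ₗ[ℂ] Sp :=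
  Finsupp.lift Sp ℂ Str (annVecR Q i)

/-- Left creation `a†_{L,i}`: prepend the letter `i`. -/
noncomputable def creL (i : Bool) : Sp →ₗ[ℂ] Sp :=
  Finsupp.lift Sp ℂ Str fun w => Finsupp.single (i :: w) 1

/-- Value of the left annihilation operator on a basis string: delete one letter
equal to `i`, weighted by the crossing factors with all letters to its left. -/
noncomputable def annVecL (Q : Bool → Bool → ℂ) (i : Bool) : Str → Sp
  | [] => 0
  | x :: t =>
      (if x = i then Finsupp.single t (1 : ℂ) else 0)
        + Q i x • Finsupp.mapDomain (List.cons x) (annVecL Q i t)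

/-- Left annihilation `a_{L,i}`. -/
noncomputable def annL (Q : Bool → Bool → ℂ) (i : Bool) : Sp →ₗ[ℂ] Sp :=
  Finsupp.lift Sp ℂ Str (annVecL Q i)

/-- Diagonal weight operator `δ_w ↦ c₀^{N₀(w)} · c₁^{N₁(w)} · δ_w`, where `N₀, N₁`
count the `0`'s and `1`'s in `w`. -/
noncomputable def Wgen (c₀ c₁ : ℂ) : Sp →ₗ[ℂ] Sp :=
  Finsupp.lift Sp ℂ Str fun w =>
    Finsupp.single w (c₀ ^ (w.count false) * c₁ ^ (w.count true))

/-- The chord-counting weight operator `W δ_w = q^{N₀(w)} r^{N₁(w)} δ_w`. -/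
noncomputable def Wop (q r : ℝ) : Sp →ₗ[ℂ] Sp := Wgen (q : ℂ) (r : ℂ)

/-- Right boundary operators `H_{R,i} = a_{R,i} + a†_{R,i}`. -/
noncomputable def HR (Q : Bool → Bool → ℂ) (i : Bool) : Sp →ₗ[ℂ] Sp := annR Q i + creR i

/-- Left boundary operators `H_{L,i} = a_{L,i} + a†_{L,i}`. -/
noncomputable def HL (Q : Bool → Bool → ℂ) (i : Bool) : Sp →ₗ[ℂ] Sp := annL Q i + creL i

/-- The vacuum `ω = δ_{[]}` (the empty string). -/
noncomputable def vac : Sp := Finsupp.single [] 1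

/-- `ε v = v([])`, the coefficient of the empty string. -/
def eps (v : Sp) : ℂ := v []

end DSSYK

namespace DSSYK

/-- The q-integer `[n]_q = (1 − qⁿ)/(1 − q)` (as a complex number). -/
noncomputable def qIntC (q : ℝ) (n : ℕ) : ℂ := (1 - (q : ℂ) ^ n) / (1 - (q : ℂ))

/-- The q-factorial `[n]!_q = Π_{j=1}^{n} [j]_q` (as a complex number). -/
noncomputable def qFactC (q : ℝ) (n : ℕ) : ℂ := ∏ j ∈ Finset.range n, qIntC q (j + 1)

/-- The q-Pochhammer symbol `(q;q)_n = Π_{j=0}^{n−1}(1 − q^{j+1})` (as a complex number). -/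
noncomputable def qPochQC (q : ℝ) (n : ℕ) : ℂ := ∏ j ∈ Finset.range n, (1 - (q : ℂ) ^ (j + 1))

/-- The infinite q-Pochhammer symbol `(x;q)_∞ = Π_{j=0}^{∞}(1 − x qʲ)`. -/
noncomputable def qPochInfC (q : ℝ) (x : ℂ) : ℂ := ∏' j : ℕ, (1 - x * (q : ℂ) ^ j)

end DSSYK

namespace DSSYK

/-- Labels for the four right-boundary generators `a†_{R,0}, a†_{R,1}, a_{R,0}, a_{R,1}`. -/
inductive Gen : Type
  | cre0 | cre1 | ann0 | ann1

/-- The undeformed generator corresponding to a label. -/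
noncomputable def Gen.toOp (q qm r : ℝ) : Gen → Module.End ℂ Sp
  | .cre0 => creR false
  | .cre1 => creR true
  | .ann0 => annR (Qmat q qm r) false
  | .ann1 => annR (Qmat q qm r) true

/-- The EoW-brane deformed generator: `a_{R,0}` is replaced by `a_{R,0} + μW`,
all other generators are unchanged. -/
noncomputable def Gen.toOpT (q qm r : ℝ) (μ : ℂ) : Gen → Module.End ℂ Sp
  | .ann0 => annR (Qmat q qm r) false + μ • Wop q r
  | g => g.toOp q qm r

end DSSYK

namespace DSSYK

open Finsupp

/-- Prepend `n` zeros, as a linear map. -/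
noncomputable def shiftL (n : ℕ) : Sp →ₗ[ℂ] Sp :=
  Finsupp.lmapDomain ℂ ℂ (fun u => List.replicate n false ++ u)

lemma shiftL_single (n : ℕ) (w : Str) :
    shiftL n (Finsupp.single w 1) = Finsupp.single (List.replicate n false ++ w) 1 := by
  simp [shiftL, Finsupp.lmapDomain_apply, Finsupp.mapDomain_single]

lemma rep_zero_id : (fun u : Str => List.replicate 0 false ++ u) = id := funext fun u => rfl

lemma shiftL_zero (x : Sp) : shiftL 0 x = x := by
  rw [shiftL, Finsupp.lmapDomain_apply, rep_zero_id, Finsupp.mapDomain_id]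

lemma lift_single (f : Str → Sp) (w : Str) :
    (Finsupp.lift Sp ℂ Str f) (Finsupp.single w (1:ℂ)) = f w := by
  simp [Finsupp.lift_apply, Finsupp.sum_single_index]

lemma creR_single (i : Bool) (w : Str) :
    creR i (Finsupp.single w 1) = Finsupp.single (w ++ [i]) 1 := lift_single _ w

lemma annR_single (Q : Bool → Bool → ℂ) (i : Bool) (w : Str) :
    annR Q i (Finsupp.single w 1) = annVecR Q i w := lift_single _ w

lemma Wop_single (q r : ℝ) (w : Str) :
    Wop q r (Finsupp.single w 1)
      = ((q:ℂ) ^ (w.count false) * (r:ℂ) ^ (w.count true)) • Finsupp.single w 1 := by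
  rw [Wop, Wgen, lift_single]
  simp [Finsupp.smul_single]

lemma lift_ne (f : Str → Sp) (x : Sp) (u : Str)
    (h : (Finsupp.lift Sp ℂ Str f x) u ≠ 0) : ∃ t, x t ≠ 0 ∧ (f t) u ≠ 0 := by
  rw [Finsupp.lift_apply, Finsupp.sum_apply] at h
  rw [Finsupp.sum] at h
  obtain ⟨t, ht, hne⟩ := Finset.exists_ne_zero_of_sum_ne_zero h
  refine ⟨t, Finsupp.mem_support_iff.mp ht, fun h0 => hne ?_⟩
  simp [h0]

lemma mapDomain_ne {f : Str → Str} {x : Sp} {u : Str}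
    (h : (Finsupp.mapDomain f x) u ≠ 0) : ∃ t, x t ≠ 0 ∧ u = f t := by
  have hu : u ∈ (Finsupp.mapDomain f x).support := Finsupp.mem_support_iff.mpr h
  obtain ⟨t, ht, rfl⟩ := Finset.mem_image.mp (Finsupp.mapDomain_support hu)
  exact ⟨t, Finsupp.mem_support_iff.mp ht, rfl⟩

lemma single_ne {w u : Str} {c : ℂ} (h : (Finsupp.single w c : Sp) u ≠ 0) : u = w := by
  by_contra hne
  exact h (Finsupp.single_eq_of_ne' (fun hw => hne hw.symm))

lemma annVecR_len (Q : Bool → Bool → ℂ) (i : Bool) :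
    ∀ (t u : Str), (annVecR Q i t) u ≠ 0 → t.length = u.length + 1 := by
  intro t
  induction t with
  | nil => intro u h; simp [annVecR] at h
  | cons x s ih =>
      intro u h
      rw [annVecR, Finsupp.add_apply] at h
      have h2 : ((if x = i then ((s.map (Q i)).prod) • Finsupp.single s (1:ℂ) else 0) u ≠ 0)
          ∨ ((Finsupp.mapDomain (List.cons x) (annVecR Q i s)) u ≠ 0) := by
        by_contra hc
        push_neg at hc
        rw [hc.1, hc.2] at h
        exact h (add_zero 0)
      rcases h2 with h2 | h2
      · split at h2
        · have hs : (Finsupp.single s (1:ℂ) : Sp) u ≠ 0 := by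
            intro h0
            apply h2
            rw [Finsupp.smul_apply, h0, smul_zero]
          have hu := single_ne hs
          subst hu; simp
        · simp at h2
      · obtain ⟨t', ht', rfl⟩ := mapDomain_ne h2
        simp [ih t' ht']

lemma toOp_len (q qm r : ℝ) (g : Gen) (x : Sp) (u : Str)
    (h : ((g.toOp q qm r) x) u ≠ 0) : ∃ t, x t ≠ 0 ∧ t.length ≤ u.length + 1 := by
  cases g <;> rw [Gen.toOp] at h
  case cre0 | cre1 =>
    obtain ⟨t, ht, hf⟩ := lift_ne _ _ _ h
    obtain rfl := single_ne hf
    exact ⟨t, ht, by simp only [List.length_append, List.length_cons, List.length_nil]; omega⟩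
  case ann0 | ann1 =>
    obtain ⟨t, ht, hf⟩ := lift_ne _ _ _ h
    exact ⟨t, ht, by rw [annVecR_len _ _ _ _ hf]⟩

lemma genZero (q qm r : ℝ) (L : List Gen) :
    ∀ (x : Sp), (∀ u : Str, x u ≠ 0 → L.length < u.length) →
      (((L.map (Gen.toOp q qm r)).prod) x) [] = 0 := by
  induction L using List.reverseRecOn with
  | nil =>
      intro x hx
      simp only [List.map_nil, List.prod_nil, Module.End.one_apply]
      by_contra h
      exact absurd (hx [] h) (by simp)
  | append_singleton L g ih =>
      intro x hx
      rw [List.map_append, List.prod_append, List.map_singleton, List.prod_singleton,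
        Module.End.mul_apply]
      refine ih _ (fun u hu => ?_)
      obtain ⟨t, ht, hlen⟩ := toOp_len q qm r g x u hu
      have := hx t ht
      simp only [List.length_append] at this
      simp only [List.length_cons, List.length_nil] at this
      omega

lemma qC_ne_one {q : ℝ} (hq1 : q < 1) : (q : ℂ) ≠ 1 := by
  exact_mod_cast (ne_of_lt hq1)

lemma qIntC_succ (q : ℝ) (hq1 : q < 1) (n : ℕ) :
    qIntC q (n + 1) = (q:ℂ) ^ n + qIntC q n := by
  have h : (1:ℂ) - (q:ℂ) ≠ 0 := sub_ne_zero.mpr (qC_ne_one hq1).symm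
  rw [qIntC, qIntC]
  field_simp
  ring

lemma qIntC_ne_zero (q : ℝ) (hq0 : 0 < q) (hq1 : q < 1) (n : ℕ) :
    qIntC q (n + 1) ≠ 0 := by
  have h : (1:ℂ) - (q:ℂ) ≠ 0 := sub_ne_zero.mpr (qC_ne_one hq1).symm
  have hp : (q:ℝ) ^ (n+1) < 1 := pow_lt_one₀ hq0.le hq1 (Nat.succ_ne_zero n)
  have : (q:ℂ) ^ (n+1) ≠ 1 := by
    intro hc
    have : ((q ^ (n+1) : ℝ) : ℂ) = ((1:ℝ) : ℂ) := by push_cast; simpa using hc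
    exact absurd (Complex.ofReal_injective this) (ne_of_lt hp)
  exact div_ne_zero (sub_ne_zero.mpr (Ne.symm this)) h

lemma qFactC_ne_zero (q : ℝ) (hq0 : 0 < q) (hq1 : q < 1) (n : ℕ) :
    qFactC q n ≠ 0 := by
  rw [qFactC]
  exact Finset.prod_ne_zero_iff.mpr (fun j _ => qIntC_ne_zero q hq0 hq1 j)

lemma coeff_succ (q : ℝ) (hq0 : 0 < q) (hq1 : q < 1) (μ : ℂ) (m : ℕ) :
    μ ^ (m+1) / qFactC q (m+1) * qIntC q (m+1) = μ * (μ ^ m / qFactC q m) := by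
  rw [qFactC, Finset.prod_range_succ, ← qFactC]
  have h1 := qFactC_ne_zero q hq0 hq1 m
  have h2 := qIntC_ne_zero q hq0 hq1 m
  field_simp
  ring

lemma prodQ_false (q qm r : ℝ) (w : Str) :
    ((w.map (Qmat q qm r false)).prod) = (q:ℂ) ^ (w.count false) * (r:ℂ) ^ (w.count true) := by
  induction w with
  | nil => simp
  | cons x t ih =>
      cases x <;> simp [List.map_cons, List.prod_cons, ih, Qmat, pow_succ] <;> ring

lemma annVec_rep_true (Q : Bool → Bool → ℂ) (n : ℕ) (w : Str) :
    annVecR Q true (List.replicate n false ++ w)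
      = Finsupp.mapDomain (fun u => List.replicate n false ++ u) (annVecR Q true w) := by
  induction n with
  | zero =>
      rw [rep_zero_id, Finsupp.mapDomain_id]
      rfl
  | succ n ih =>
      have hrep : List.replicate (n+1) false ++ w = false :: (List.replicate n false ++ w) := by
        simp [List.replicate_succ]
      rw [hrep, annVecR, ih, ← Finsupp.mapDomain_comp]
      have hc : (List.cons false) ∘ (fun u : Str => List.replicate n false ++ u)
          = fun u : Str => List.replicate (n+1) false ++ u := by
        funext u; simp [List.replicate_succ]
      simp [hc]

lemma annVec_rep_false (q qm r : ℝ) (hq1 : q < 1) (n : ℕ) (w : Str) :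
    annVecR (Qmat q qm r) false (List.replicate n false ++ w)
      = (qIntC q n * ((w.map (Qmat q qm r false)).prod))
          • Finsupp.single (List.replicate (n-1) false ++ w) 1
        + Finsupp.mapDomain (fun u => List.replicate n false ++ u)
            (annVecR (Qmat q qm r) false w) := by
  induction n with
  | zero =>
      rw [rep_zero_id, Finsupp.mapDomain_id,
        show qIntC q 0 = 0 by simp [qIntC], zero_mul, zero_smul, zero_add]
      rfl
  | succ n ih =>
      have hrep : List.replicate (n+1) false ++ w = false :: (List.replicate n false ++ w) := by
        simp [List.replicate_succ]
      rw [hrep, annVecR, if_pos rfl, ih]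
      rw [Finsupp.mapDomain_add, Finsupp.mapDomain_smul, Finsupp.mapDomain_single,
        ← Finsupp.mapDomain_comp]
      have hc : (List.cons false) ∘ (fun u : Str => List.replicate n false ++ u)
          = fun u : Str => List.replicate (n+1) false ++ u := by
        funext u; simp [List.replicate_succ]
      rw [hc]
      have hprod : (((List.replicate n false ++ w).map (Qmat q qm r false)).prod)
          = (q:ℂ) ^ n * ((w.map (Qmat q qm r false)).prod) := by
        rw [List.map_append, List.prod_append, List.map_replicate, List.prod_replicate]
        rfl
      have hstr : (qIntC q n * ((w.map (Qmat q qm r false)).prod))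
            • (Finsupp.single (false :: (List.replicate (n-1) false ++ w)) (1:ℂ))
          = (qIntC q n * ((w.map (Qmat q qm r false)).prod))
            • (Finsupp.single (List.replicate n false ++ w) (1:ℂ)) := by
        cases n with
        | zero => simp [qIntC]
        | succ m => simp [List.replicate_succ]
      rw [hstr, hprod]
      rw [qIntC_succ q hq1 n]
      have h2 : List.replicate (n + 1 - 1) false ++ w = List.replicate n false ++ w := by simp
      rw [h2]
      rw [add_mul, add_smul]
      abel

lemma shiftL_cre (i : Bool) (n : ℕ) (x : Sp) :
    shiftL n (creR i x) = creR i (shiftL n x) := by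
  have h : (shiftL n ∘ₗ creR i) = (creR i ∘ₗ shiftL n) := by
    apply Finsupp.lhom_ext
    intro a b
    rw [show (Finsupp.single a b : Sp) = b • Finsupp.single a 1 by
      rw [Finsupp.smul_single_one]]
    simp only [map_smul, LinearMap.comp_apply]
    rw [creR_single, shiftL_single, shiftL_single, creR_single, List.append_assoc]
  exact LinearMap.congr_fun h x

lemma shiftL_ann_true (Q : Bool → Bool → ℂ) (n : ℕ) (x : Sp) :
    shiftL n (annR Q true x) = annR Q true (shiftL n x) := by
  have h : (shiftL n ∘ₗ annR Q true) = (annR Q true ∘ₗ shiftL n) := by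
    apply Finsupp.lhom_ext
    intro a b
    rw [show (Finsupp.single a b : Sp) = b • Finsupp.single a 1 by
      rw [Finsupp.smul_single_one]]
    simp only [map_smul, LinearMap.comp_apply]
    rw [annR_single, shiftL_single, annR_single, annVec_rep_true]
    rw [shiftL, Finsupp.lmapDomain_apply]
  exact LinearMap.congr_fun h x

lemma shiftL_ann_false (q qm r : ℝ) (hq1 : q < 1) (n : ℕ) (x : Sp) :
    annR (Qmat q qm r) false (shiftL n x)
      = qIntC q n • (shiftL (n-1) (Wop q r x)) + shiftL n (annR (Qmat q qm r) false x) := by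
  have h : (annR (Qmat q qm r) false ∘ₗ shiftL n)
      = qIntC q n • (shiftL (n-1) ∘ₗ Wop q r) + (shiftL n ∘ₗ annR (Qmat q qm r) false) := by
    apply Finsupp.lhom_ext
    intro a b
    rw [show (Finsupp.single a b : Sp) = b • Finsupp.single a 1 by
      rw [Finsupp.smul_single_one]]
    simp only [map_smul, LinearMap.comp_apply, LinearMap.add_apply, LinearMap.smul_apply]
    congr 1
    rw [shiftL_single, annR_single, annVec_rep_false q qm r hq1 n a, prodQ_false,
      annR_single, Wop_single, map_smul, shiftL_single, smul_smul,
      shiftL, Finsupp.lmapDomain_apply]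
  exact LinearMap.congr_fun h x

lemma shiftL_len (n : ℕ) (x : Sp) (t : Str) (h : (shiftL n x) t ≠ 0) : n ≤ t.length := by
  rw [shiftL, Finsupp.lmapDomain_apply] at h
  obtain ⟨s, _, rfl⟩ := mapDomain_ne h
  simp only [List.length_append, List.length_replicate]
  omega

lemma shift_top_zero (q qm r : ℝ) (L : List Gen) (y : Sp) :
    (((L.map (Gen.toOp q qm r)).prod) (shiftL (L.length + 1) y)) [] = 0 := by
  refine genZero q qm r L _ (fun u hu => ?_)
  have := shiftL_len (L.length + 1) y u hu
  omega

lemma sum_ext0 (k : ℕ) (c S : ℕ → ℂ) (hS : S (k+1) = 0) :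
    ∑ n ∈ Finset.range (k+1), c n * S n = ∑ n ∈ Finset.range (k+1+1), c n * S n := by
  rw [Finset.sum_range_succ (fun n => c n * S n) (k+1), hS, mul_zero, add_zero]

lemma sum_shuffle (k : ℕ) (μ : ℂ) (c d : ℕ → ℂ) (S T : ℕ → ℂ)
    (hd0 : d 0 = 0) (hc : ∀ m, c (m+1) * d (m+1) = μ * c m) (hS : S (k+1) = 0) :
    ∑ n ∈ Finset.range (k+1), c n * (S n + μ * T n)
      = ∑ n ∈ Finset.range (k+1+1), c n * (d n * T (n-1) + S n) := by
  have h1 : ∀ n, c n * (d n * T (n-1) + S n) = c n * d n * T (n-1) + c n * S n :=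
    fun n => by ring
  have h2 : ∀ n, c n * (S n + μ * T n) = c n * S n + μ * c n * T n :=
    fun n => by ring
  simp only [h1, h2, Finset.sum_add_distrib]
  rw [Finset.sum_range_succ (fun n => c n * S n) (k+1), hS, mul_zero, add_zero]
  rw [Finset.sum_range_succ' (fun n => c n * d n * T (n-1)) (k+1)]
  simp only [hd0, mul_zero, zero_mul, add_zero, Nat.add_sub_cancel]
  have h3 : ∀ m, c (m+1) * d (m+1) * T m = μ * c m * T m := fun m => by rw [hc]
  simp only [h3]
  exact add_comm _ _

lemma key (q qm r : ℝ) (hq0 : 0 < q) (hq1 : q < 1) (μ : ℂ) (L : List Gen) :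
    ∀ x : Sp,
    (((L.map (Gen.toOpT q qm r μ)).prod) x) []
      = ∑ n ∈ Finset.range (L.length + 1), (μ ^ n / qFactC q n) *
          ((((L.map (Gen.toOp q qm r)).prod) (shiftL n x)) []) := by
  induction L using List.reverseRecOn with
  | nil =>
      intro x
      simp only [List.map_nil, List.prod_nil, Module.End.one_apply, List.length_nil,
        zero_add, Finset.range_one, Finset.sum_singleton, pow_zero, shiftL_zero]
      rw [show qFactC q 0 = 1 by simp [qFactC]]
      simp
  | append_singleton L g ih =>
      intro x
      simp only [List.map_append, List.prod_append, List.map_cons, List.map_nil,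
        List.prod_cons, List.prod_nil, mul_one, Module.End.mul_apply,
        List.length_append, List.length_cons, List.length_nil]
      rw [ih]
      cases g with
      | cre0 =>
          simp only [Gen.toOpT, Gen.toOp, ← shiftL_cre]
          exact sum_ext0 L.length _ _ (shift_top_zero q qm r L (creR false x))
      | cre1 =>
          simp only [Gen.toOpT, Gen.toOp, ← shiftL_cre]
          exact sum_ext0 L.length _ _ (shift_top_zero q qm r L (creR true x))
      | ann1 =>
          simp only [Gen.toOpT, Gen.toOp, ← shiftL_ann_true]
          exact sum_ext0 L.length _ _
            (shift_top_zero q qm r L (annR (Qmat q qm r) true x))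
      | ann0 =>
          simp only [Gen.toOpT, Gen.toOp]
          have hsplit : ∀ n : ℕ,
              (((L.map (Gen.toOp q qm r)).prod)
                  (shiftL n ((annR (Qmat q qm r) false + μ • Wop q r) x))) []
                = (((L.map (Gen.toOp q qm r)).prod) (shiftL n (annR (Qmat q qm r) false x))) []
                  + μ * (((L.map (Gen.toOp q qm r)).prod) (shiftL n (Wop q r x))) [] := by
            intro n
            rw [LinearMap.add_apply, LinearMap.smul_apply, map_add, map_smul, map_add,
              map_smul, Finsupp.add_apply, Finsupp.smul_apply, smul_eq_mul]
          have hrhs : ∀ n : ℕ,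
              (((L.map (Gen.toOp q qm r)).prod) (annR (Qmat q qm r) false (shiftL n x))) []
                = qIntC q n * (((L.map (Gen.toOp q qm r)).prod) (shiftL (n-1) (Wop q r x))) []
                  + (((L.map (Gen.toOp q qm r)).prod) (shiftL n (annR (Qmat q qm r) false x))) [] := by
            intro n
            rw [shiftL_ann_false q qm r hq1, map_add, map_smul, Finsupp.add_apply,
              Finsupp.smul_apply, smul_eq_mul]
          simp only [hsplit, hrhs]
          exact sum_shuffle L.length μ _ (qIntC q) _ _
            (by simp [qIntC]) (fun m => coeff_succ q hq0 hq1 μ m)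
            (shift_top_zero q qm r L (annR (Qmat q qm r) false x))

end DSSYK

open DSSYK in
/-- for any word `A₁,…,A_k` in the generators
`{a†_{R,0}, a†_{R,1}, a_{R,0}, a_{R,1}}` with EoW-deformation `Ã_t`,
`ε((Ã₁∘⋯∘Ã_k)(ω)) = Σ_{n=0}^{k} (μⁿ/[n]!_q)·ε((A₁∘⋯∘A_k)(δ_{0ⁿ}))`, and
`ε((A₁∘⋯∘A_k)(δ_{0ⁿ})) = 0` for `n > k`; i.e. the deformed vacuum moments equal
the undeformed moments paired against the q-coherent state `B_μ = Σ_n (μⁿ/[n]!_q) δ_{0ⁿ}`. -/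
theorem stmt_8 (q qm r : ℝ) (hq0 : 0 < q) (hq1 : q < 1) (μ : ℂ)
    (k : ℕ) (g : Fin k → Gen) :
    (eps (((List.ofFn fun t => (g t).toOpT q qm r μ).prod) vac)
      = ∑ n ∈ Finset.range (k + 1), (μ ^ n / qFactC q n)
          * eps (((List.ofFn fun t => (g t).toOp q qm r).prod)
              (Finsupp.single (List.replicate n false) 1))) ∧
    (∀ n : ℕ, k < n →
      eps (((List.ofFn fun t => (g t).toOp q qm r).prod)
        (Finsupp.single (List.replicate n false) 1)) = 0) := by
  have e1 : (List.ofFn fun t => (g t).toOpT q qm r μ)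
      = (List.ofFn g).map (Gen.toOpT q qm r μ) := by
    rw [List.map_ofFn]; rfl
  have e2 : (List.ofFn fun t => (g t).toOp q qm r)
      = (List.ofFn g).map (Gen.toOp q qm r) := by
    rw [List.map_ofFn]; rfl
  constructor
  · have h := key q qm r hq0 hq1 μ (List.ofFn g) vac
    simp only [vac, shiftL_single, List.append_nil, List.length_ofFn] at h
    simpa [eps, vac, e1, e2] using h
  · intro n hn
    have h := genZero q qm r (List.ofFn g) (Finsupp.single (List.replicate n false) 1)
      (fun u hu => by
        obtain rfl := single_ne hu
        simpa using hn)
    simpa [eps, e2] using h
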